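/- arXiv:1810.06016 — 3 statements merged into one kernel-verified Lean document; each statement's English description precedes it below -/
import Mathlib

section
/- Let V be a finite-dimensional real vector space with a nondegenerate symmetric bilinear form g and S : V → V a g-symmetric linear operator. Then the kernel of S is a nondegenerate subspace (i.e., ker S ∩ (ker S)^⊥ = 0 with respect to g) if and only if ker S² = ker S. -/
/-- For a `g`-symmetric operator `S` on a finite-dimensional real
vector space with nondegenerate symmetric bilinear form `g`, the kernel of `S`
is a nondegenerate subspace iff `ker S² = ker S`. -/
theorem ker_nondegenerate_iff_ker_sq_eq_ker
    {V : Type*} [AddCommGroup V] [Module ℝ V] [FiniteDimensional ℝ V]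
    (g : LinearMap.BilinForm ℝ V)
    (hnd : ∀ x : V, (∀ y : V, g x y = 0) → x = 0)
    (hsymm : ∀ x y : V, g x y = g y x)
    (S : V →ₗ[ℝ] V) (hS : ∀ x y : V, g (S x) y = g x (S y)) :
    LinearMap.ker S ⊓ g.orthogonal (LinearMap.ker S) = ⊥ ↔
      LinearMap.ker (S ∘ₗ S) = LinearMap.ker S := by
  have hrefl : g.IsRefl := fun x y h => by rw [hsymm]; exact h
  have hndg : g.Nondegenerate := ⟨hnd, fun y h => hnd y fun x => by rw [hsymm]; exact h x⟩
  -- orthogonal of ker S is range S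
  have hle : LinearMap.range S ≤ g.orthogonal (LinearMap.ker S) := by
    rintro _ ⟨x, rfl⟩ n hn
    have : g (S n) x = 0 := by
      rw [LinearMap.mem_ker.mp hn]; simp
    rw [hsymm, hS, hsymm]
    exact this
  have horth : g.orthogonal (LinearMap.ker S) = LinearMap.range S := by
    refine (Submodule.eq_of_le_of_finrank_le hle ?_).symm
    rw [LinearMap.BilinForm.finrank_orthogonal hndg]
    have h1 := LinearMap.finrank_range_add_finrank_ker S
    omega
  rw [horth]
  constructor
  · intro h
    refine le_antisymm (fun x hx => ?_) (fun x hx => ?_)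
    · have hx' : S (S x) = 0 := hx
      have : S x ∈ LinearMap.ker S ⊓ LinearMap.range S :=
        ⟨hx', ⟨x, rfl⟩⟩
      rw [h] at this
      exact LinearMap.mem_ker.mpr (by simpa using this)
    · have : S x = 0 := hx
      simp [LinearMap.mem_ker, this]
  · intro h
    rw [eq_bot_iff]
    rintro v ⟨hv1, x, rfl⟩
    have : S (S x) = 0 := hv1
    have hx : x ∈ LinearMap.ker (S ∘ₗ S) := by simpa using this
    rw [h] at hx
    simpa using hx
end

section
/- Let y : [0, ∞) → ℝ be differentiable with y'(t) = y(t)² for all t ≥ 0. Then y(t) ≤ 0 for all t ≥ 0; symmetrically, a global solution on (−∞, 0] is nonnegative; hence a solution defined on all of ℝ vanishes identically. -/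
open Set

private lemma riccati_part1 (y : ℝ → ℝ)
    (hy : ∀ t ∈ Set.Ici (0 : ℝ), HasDerivWithinAt y ((y t) ^ 2) (Set.Ici 0) t) :
    ∀ t ∈ Set.Ici (0 : ℝ), y t ≤ 0 := by
  intro t ht
  by_contra hpos
  push_neg at hpos
  have hcont : ContinuousOn y (Set.Ici 0) := fun s hs => (hy s hs).continuousWithinAt
  have hmono : MonotoneOn y (Set.Ici 0) := by
    apply monotoneOn_of_deriv_nonneg (convex_Ici 0) hcont
    · intro s hs
      rw [interior_Ici] at hs
      exact ((hy s (Set.Ioi_subset_Ici_self hs)).hasDerivAt (Ici_mem_nhds hs)).differentiableAt.differentiableWithinAt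
    · intro s hs
      rw [interior_Ici] at hs
      rw [((hy s (Set.Ioi_subset_Ici_self hs)).hasDerivAt (Ici_mem_nhds hs)).deriv]
      positivity
  set c := y t with hc
  set b := t + c⁻¹ with hb
  have htb : t ≤ b := by
    have : 0 < c⁻¹ := inv_pos.mpr hpos
    simp only [hb]; linarith
  have hpos' : ∀ x ∈ Set.Icc t b, 0 < y x := by
    intro x hx
    have hx0 : (0:ℝ) ≤ x := le_trans ht hx.1
    exact lt_of_lt_of_le hpos (hmono ht hx0 hx.1)
  set g : ℝ → ℝ := fun s => (y s)⁻¹ + (s - t) with hg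
  have gcont : ContinuousOn g (Set.Icc t b) := by
    apply ContinuousOn.add
    · exact ((hcont.mono (fun x hx => le_trans ht hx.1)).inv₀
        (fun x hx => (hpos' x hx).ne'))
    · exact (continuous_id.sub continuous_const).continuousOn
  have gderiv : ∀ x ∈ Set.Ico t b, HasDerivWithinAt g 0 (Set.Ici x) x := by
    intro x hx
    have hx0 : (0:ℝ) ≤ x := le_trans ht hx.1
    have h1 : HasDerivWithinAt y ((y x) ^ 2) (Set.Ici x) x :=
      (hy x hx0).mono (Set.Ici_subset_Ici.mpr hx0)
    have hne : y x ≠ 0 := (hpos' x ⟨hx.1, hx.2.le⟩).ne'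
    have h2 := h1.inv hne
    have h3 : HasDerivWithinAt (fun s => s - t) 1 (Set.Ici x) x := by
      simpa using ((hasDerivAt_id x).sub_const t).hasDerivWithinAt
    have h4 := h2.add h3
    refine h4.congr_deriv ?_
    field_simp
    norm_num
  have hgb := constant_of_has_deriv_right_zero gcont gderiv b (Set.right_mem_Icc.mpr htb)
  have hgt : g t = c⁻¹ := by simp [hg, hc]
  have hgb' : g b = (y b)⁻¹ + c⁻¹ := by simp [hg, hb]
  have hyb : 0 < y b := hpos' b ⟨htb, le_refl b⟩
  have : (y b)⁻¹ = 0 := by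
    rw [hgb', hgt] at hgb
    linarith
  exact absurd this (by positivity)

/-- A solution of `y' = y²` on `[0, ∞)` is nonpositive there; a
solution on `(−∞, 0]` is nonnegative there; hence a solution on all of `ℝ`
vanishes identically. -/
theorem riccati_half_line_sign_and_global_vanishing :
    (∀ y : ℝ → ℝ,
      (∀ t ∈ Set.Ici (0 : ℝ), HasDerivWithinAt y ((y t) ^ 2) (Set.Ici 0) t) →
      ∀ t ∈ Set.Ici (0 : ℝ), y t ≤ 0) ∧
    (∀ y : ℝ → ℝ,
      (∀ t ∈ Set.Iic (0 : ℝ), HasDerivWithinAt y ((y t) ^ 2) (Set.Iic 0) t) →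
      ∀ t ∈ Set.Iic (0 : ℝ), 0 ≤ y t) ∧
    (∀ y : ℝ → ℝ, (∀ t : ℝ, HasDerivAt y ((y t) ^ 2) t) → ∀ t : ℝ, y t = 0) := by
  have part2 : ∀ y : ℝ → ℝ,
      (∀ t ∈ Set.Iic (0 : ℝ), HasDerivWithinAt y ((y t) ^ 2) (Set.Iic 0) t) →
      ∀ t ∈ Set.Iic (0 : ℝ), 0 ≤ y t := by
    intro y hy t ht
    set z : ℝ → ℝ := fun s => -y (-s) with hz
    have hzderiv : ∀ s ∈ Set.Ici (0 : ℝ), HasDerivWithinAt z ((z s) ^ 2) (Set.Ici 0) s := by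
      intro s hs
      have hneg : HasDerivWithinAt (fun x : ℝ => -x) (-1 : ℝ) (Set.Ici 0) s :=
        (hasDerivAt_neg s).hasDerivWithinAt
      have hmaps : Set.MapsTo (fun x : ℝ => -x) (Set.Ici (0:ℝ)) (Set.Iic (0:ℝ)) := by
        intro x hx; simpa using hx
      have hcomp := (hy (-s) (by simpa using hs)).scomp s hneg hmaps
      have := hcomp.neg
      refine this.congr_deriv ?_
      simp [hz]
    have := riccati_part1 z hzderiv (-t) (by simpa using ht)
    simpa [hz] using this
  refine ⟨riccati_part1, part2, ?_⟩
  intro y hy t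
  have h1 : y t ≤ 0 := by
    set w : ℝ → ℝ := fun s => y (s + t) with hw
    have hwd : ∀ s ∈ Set.Ici (0 : ℝ), HasDerivWithinAt w ((w s) ^ 2) (Set.Ici 0) s := by
      intro s _
      have : HasDerivAt w ((y (s + t)) ^ 2) s := by
        have := (hy (s + t)).comp s ((hasDerivAt_id s).add_const t)
        simpa [Function.comp_def] using this
      exact this.hasDerivWithinAt
    simpa [hw] using riccati_part1 w hwd 0 (Set.mem_Ici.mpr le_rfl)
  have h2 : 0 ≤ y t := by
    set w : ℝ → ℝ := fun s => y (s + t) with hw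
    have hwd : ∀ s ∈ Set.Iic (0 : ℝ), HasDerivWithinAt w ((w s) ^ 2) (Set.Iic 0) s := by
      intro s _
      have : HasDerivAt w ((y (s + t)) ^ 2) s := by
        have := (hy (s + t)).comp s ((hasDerivAt_id s).add_const t)
        simpa [Function.comp_def] using this
      exact this.hasDerivWithinAt
    simpa [hw] using part2 w hwd 0 (Set.mem_Iic.mpr le_rfl)
  linarith
end

section
/- Let V be a Lorentzian vector space and S a g-symmetric operator with dim ker S = n − 2 and ker S degenerate (its radical nonzero). Then there exists a null vector ξ ∈ ker S with S²-related property: im S ∩ ker S = span{ξ}, i.e., the intersection of the image and kernel of S is exactly the one-dimensional radical of ker S. -/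
/-- Let `S` be a `g`-symmetric operator on an `n`-dimensional
Lorentzian vector space with `dim ker S = n − 2` and `ker S` degenerate.  Then
`im S ∩ ker S = Rad(ker S)`, and this space is one-dimensional, spanned by a
null vector `ξ`. -/
theorem degenerate_nullity_radical_is_null_line
    {V : Type*} [AddCommGroup V] [Module ℝ V] [FiniteDimensional ℝ V]
    (g : LinearMap.BilinForm ℝ V)
    (hsymm : ∀ x y : V, g x y = g y x)
    {n : ℕ} (b : Module.Basis (Fin n) ℝ V)
    (hb : ∀ i j : Fin n, g (b i) (b j) =
      if i = j then (if i.val = 0 then -1 else 1) else 0)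
    (S : V →ₗ[ℝ] V) (hS : ∀ x y : V, g (S x) y = g x (S y))
    (hker : Module.finrank ℝ (LinearMap.ker S) = n - 2)
    (hdeg : LinearMap.ker S ⊓ g.orthogonal (LinearMap.ker S) ≠ ⊥) :
    LinearMap.range S ⊓ LinearMap.ker S
        = LinearMap.ker S ⊓ g.orthogonal (LinearMap.ker S) ∧
    ∃ ξ : V, ξ ≠ 0 ∧ g ξ ξ = 0 ∧
      LinearMap.range S ⊓ LinearMap.ker S = Submodule.span ℝ {ξ} := by
  have hfr : Module.finrank ℝ V = n := by
    rw [Module.finrank_eq_card_basis b, Fintype.card_fin]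
  -- the kernel is nontrivial, hence `n ≥ 3`
  have hker_ne : LinearMap.ker S ≠ ⊥ := by
    intro h
    exact hdeg (by rw [h, bot_inf_eq])
  have hker_pos : 0 < Module.finrank ℝ (LinearMap.ker S) := by
    rw [Module.finrank_pos_iff_exists_ne_zero]
    obtain ⟨x, hx, hx0⟩ := (Submodule.ne_bot_iff _).mp hker_ne
    exact ⟨⟨x, hx⟩, by simpa using hx0⟩
  have hker_le : Module.finrank ℝ (LinearMap.ker S) ≤ n := by
    rw [← hfr]; exact Submodule.finrank_le _
  have hn3 : 3 ≤ n := by omega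
  have h0n : 0 < n := by omega
  obtain ⟨i0, hi0⟩ : ∃ i : Fin n, (i : ℕ) = 0 := ⟨⟨0, h0n⟩, rfl⟩
  -- coordinate expansion of the form
  have hexp : ∀ x y : V, g x y =
      (∑ i, b.repr x i * b.repr y i) - 2 * (b.repr x i0 * b.repr y i0) := by
    intro x y
    have h1 : g x y = ∑ i, ∑ j, b.repr x i * (b.repr y j * g (b i) (b j)) := by
      conv_lhs => rw [← b.sum_repr x, ← b.sum_repr y]
      simp only [map_sum, map_smul, LinearMap.sum_apply, LinearMap.smul_apply,
        smul_eq_mul, Finset.mul_sum]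
      rw [Finset.sum_comm]
      exact Finset.sum_congr rfl fun i _ => Finset.sum_congr rfl fun j _ => by ring
    have h2 : ∀ i : Fin n, (∑ j, b.repr x i * (b.repr y j * g (b i) (b j)))
        = b.repr x i * b.repr y i * (if (i : ℕ) = 0 then (-1 : ℝ) else 1) := by
      intro i
      simp only [hb, mul_ite, ite_mul, mul_zero, zero_mul]
      rw [Finset.sum_ite_eq]
      simp [mul_assoc, mul_comm]
    rw [h1, Finset.sum_congr rfl fun i _ => h2 i]
    have h3 : ∀ i : Fin n,
        b.repr x i * b.repr y i * (if (i : ℕ) = 0 then (-1 : ℝ) else 1)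
        = b.repr x i * b.repr y i
            - (if i = i0 then 2 * (b.repr x i * b.repr y i) else 0) := by
      intro i
      by_cases h : i = i0
      · subst h; simp [hi0]; ring
      · have hv : (i : ℕ) ≠ 0 := by
          intro hc; exact h (Fin.ext (by rw [hc, hi0]))
        simp [h, hv]
    rw [Finset.sum_congr rfl fun i _ => h3 i, Finset.sum_sub_distrib,
      Finset.sum_ite_eq']
    simp only [Finset.mem_univ, if_true]
  -- the form is reflexive and nondegenerate
  have hrefl : g.IsRefl := fun x y h => by rw [hsymm]; exact h
  have hnd : g.Nondegenerate := by
    refine (LinearMap.IsRefl.nondegenerate_iff_separatingLeft hrefl).mpr ?_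
    intro x hx
    refine b.ext_elem fun i => ?_
    have h := hx (b i)
    rw [hexp] at h
    simp only [Module.Basis.repr_self, Finsupp.single_apply] at h
    simp only [mul_ite, mul_one, mul_zero, Finset.sum_ite_eq, Finset.mem_univ,
      if_true] at h
    by_cases hii : i = i0
    · subst hii
      simp at h
      simp only [map_zero, Finsupp.coe_zero, Pi.zero_apply]
      linarith
    · simp only [if_neg hii, sub_zero] at h
      simpa using h
  -- `range S ≤ (ker S)^⊥` and equality by dimensions
  have hle : LinearMap.range S ≤ g.orthogonal (LinearMap.ker S) := by
    rintro _ ⟨y, rfl⟩ z hz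
    show g z (S y) = 0
    rw [← hS]
    rw [LinearMap.mem_ker.mp hz]
    simp
  have hdim_orth : Module.finrank ℝ (g.orthogonal (LinearMap.ker S))
      = Module.finrank ℝ V - Module.finrank ℝ (LinearMap.ker S) :=
    LinearMap.BilinForm.finrank_orthogonal hnd _
  have hdim_range : Module.finrank ℝ (LinearMap.range S)
      = Module.finrank ℝ V - Module.finrank ℝ (LinearMap.ker S) := by
    have := LinearMap.finrank_range_add_finrank_ker S
    omega
  have hrange_eq : LinearMap.range S = g.orthogonal (LinearMap.ker S) :=
    Submodule.eq_of_le_of_finrank_le hle (by rw [hdim_orth, hdim_range])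
  have hpart1 : LinearMap.range S ⊓ LinearMap.ker S
      = LinearMap.ker S ⊓ g.orthogonal (LinearMap.ker S) := by
    rw [hrange_eq, inf_comm]
  refine ⟨hpart1, ?_⟩
  obtain ⟨ξ, hξmem, hξ0⟩ := (Submodule.ne_bot_iff _).mp hdeg
  obtain ⟨hξk, hξo⟩ := hξmem
  have hξnull : g ξ ξ = 0 := hξo ξ hξk
  refine ⟨ξ, hξ0, hξnull, ?_⟩
  rw [hpart1]
  apply le_antisymm
  · -- every radical element is a multiple of ξ
    rintro η ⟨hηk, hηo⟩
    have hηnull : g η η = 0 := hηo η hηk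
    have hξη : g ξ η = 0 := hηo ξ hξk
    rcases eq_or_ne η 0 with rfl | hη0
    · exact Submodule.zero_mem _
    -- move to Euclidean space
    let φ : V ≃ₗ[ℝ] EuclideanSpace ℝ (Fin n) :=
      b.equivFun.trans (WithLp.linearEquiv 2 ℝ (Fin n → ℝ)).symm
    have hφ : ∀ (x : V) (i : Fin n), φ x i = b.repr x i := fun x i => rfl
    let u : EuclideanSpace ℝ (Fin n) := φ ξ
    let v : EuclideanSpace ℝ (Fin n) := φ η
    have hinner : ∀ x y : V,
        (inner ℝ (φ x) (φ y) : ℝ) = ∑ i, b.repr x i * b.repr y i := by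
      intro x y
      rw [PiLp.inner_apply]
      simp [RCLike.inner_apply, hφ, mul_comm]
    have huu : (inner ℝ u u : ℝ) = 2 * (b.repr ξ i0 * b.repr ξ i0) := by
      have := hexp ξ ξ; rw [hξnull] at this
      rw [show (inner ℝ u u : ℝ) = ∑ i, b.repr ξ i * b.repr ξ i from hinner ξ ξ]
      linarith
    have hvv : (inner ℝ v v : ℝ) = 2 * (b.repr η i0 * b.repr η i0) := by
      have := hexp η η; rw [hηnull] at this
      rw [show (inner ℝ v v : ℝ) = ∑ i, b.repr η i * b.repr η i from hinner η η]
      linarith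
    have huv : (inner ℝ u v : ℝ) = 2 * (b.repr ξ i0 * b.repr η i0) := by
      have := hexp ξ η; rw [hξη] at this
      rw [show (inner ℝ u v : ℝ) = ∑ i, b.repr ξ i * b.repr η i from hinner ξ η]
      linarith
    have hsq : (inner ℝ u v : ℝ) ^ 2 = (inner ℝ u u : ℝ) * (inner ℝ v v : ℝ) := by
      rw [huu, hvv, huv]; ring
    have hu0 : u ≠ 0 := fun h => hξ0 (φ.map_eq_zero_iff.mp (by simpa [u] using h))
    have hv0 : v ≠ 0 := fun h => hη0 (φ.map_eq_zero_iff.mp (by simpa [v] using h))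
    have hnorm : |(inner ℝ u v : ℝ)| = ‖u‖ * ‖v‖ := by
      have h1 : (inner ℝ u u : ℝ) = ‖u‖ * ‖u‖ := real_inner_self_eq_norm_mul_norm u
      have h2 : (inner ℝ v v : ℝ) = ‖v‖ * ‖v‖ := real_inner_self_eq_norm_mul_norm v
      have h3 : |(inner ℝ u v : ℝ)| ^ 2 = (‖u‖ * ‖v‖) ^ 2 := by
        rw [sq_abs, hsq, h1, h2]; ring
      have h4 : (0 : ℝ) ≤ |(inner ℝ u v : ℝ)| := abs_nonneg _
      have h5 : (0 : ℝ) ≤ ‖u‖ * ‖v‖ := mul_nonneg (norm_nonneg _) (norm_nonneg _)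
      nlinarith
    have hne : ‖u‖ * ‖v‖ ≠ 0 :=
      mul_ne_zero (norm_ne_zero_iff.mpr hu0) (norm_ne_zero_iff.mpr hv0)
    have hdiv : |(inner ℝ u v : ℝ) / (‖u‖ * ‖v‖)| = 1 := by
      rw [abs_div, hnorm, abs_of_nonneg (mul_nonneg (norm_nonneg _) (norm_nonneg _))]
      exact div_self hne
    obtain ⟨-, r, -, hr⟩ := (abs_real_inner_div_norm_mul_norm_eq_one_iff u v).mp hdiv
    have : η = r • ξ := by
      apply φ.injective
      rw [map_smul]
      exact hr
    rw [Submodule.mem_span_singleton]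
    exact ⟨r, this.symm⟩
  · rw [Submodule.span_le, Set.singleton_subset_iff]
    exact ⟨hξk, hξo⟩
end
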